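/- Let a < 0 be a squarefree integer, b a prime with Legendre symbol (a/b) = -1, and suppose X, Y, Z are integers with gcd(X, Y, Z) = 1 satisfying a·X² + b·(Y² - a·Z²) = 0. Then X = Y = Z = 0, a contradiction; that is, the equation a X² + b(Y² - a Z²) = 0 has no solution in coprime integers. -/

import Mathlib

/-- If a < 0 is squarefree and b is a prime with (a/b) = -1, then the equation
a X² + b (Y² - a Z²) = 0 has no solution in coprime integers. -/
theorem no_parabolic_elements
    (a : ℤ) (hsf : Squarefree a) (hneg : a < 0)
    (b : ℕ) (hb : b.Prime) (hab : @legendreSym b ⟨hb⟩ a = -1)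
    (X Y Z : ℤ) (hgcd : Int.gcd (Int.gcd X Y) Z = 1)
    (heq : a * X ^ 2 + (b : ℤ) * (Y ^ 2 - a * Z ^ 2) = 0) : False := by
  haveI : Fact b.Prime := ⟨hb⟩
  have ha0 : (a : ZMod b) ≠ 0 := by
    intro h
    rw [legendreSym.eq_zero_iff b a |>.mpr h] at hab
    norm_num at hab
  have hnsq : ¬IsSquare (a : ZMod b) := (legendreSym.eq_neg_one_iff b).mp hab
  -- X ≡ 0 mod b
  have h1 : ((a : ZMod b)) * (X : ZMod b) ^ 2 = 0 := by
    have := congrArg (Int.cast : ℤ → ZMod b) heq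
    push_cast at this
    rwa [ZMod.natCast_self, zero_mul, add_zero] at this
  have hX : (X : ZMod b) = 0 := by
    rcases mul_eq_zero.mp h1 with h | h
    · exact absurd h ha0
    · exact pow_eq_zero_iff (by norm_num) |>.mp h
  have hXd : (b : ℤ) ∣ X := (ZMod.intCast_zmod_eq_zero_iff_dvd X b).mp hX
  obtain ⟨X', rfl⟩ := hXd
  -- divide out one factor of b
  have hb0 : (b : ℤ) ≠ 0 := Int.natCast_ne_zero.mpr hb.pos.ne'
  have heq2 : a * b * X' ^ 2 + (Y ^ 2 - a * Z ^ 2) = 0 := by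
    have : (b : ℤ) * (a * b * X' ^ 2 + (Y ^ 2 - a * Z ^ 2)) = 0 := by ring_nf; linarith [heq]
    exact (mul_eq_zero.mp this).resolve_left hb0
  have h2 : (Y : ZMod b) ^ 2 = (a : ZMod b) * (Z : ZMod b) ^ 2 := by
    have := congrArg (Int.cast : ℤ → ZMod b) heq2
    push_cast at this
    rw [ZMod.natCast_self] at this
    linear_combination this
  have hZ : (Z : ZMod b) = 0 := by
    by_contra hZ
    apply hnsq
    refine ⟨(Y : ZMod b) * ((Z : ZMod b))⁻¹, ?_⟩
    have hZ2 : ((Z : ZMod b)) ^ 2 ≠ 0 := pow_ne_zero _ hZ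
    field_simp
    linear_combination -h2
  have hY : (Y : ZMod b) = 0 := by
    rw [hZ] at h2
    simpa using pow_eq_zero_iff (n := 2) (by norm_num) |>.mp (by simpa using h2)
  have hYd : (b : ℤ) ∣ Y := (ZMod.intCast_zmod_eq_zero_iff_dvd Y b).mp hY
  have hZd : (b : ℤ) ∣ Z := (ZMod.intCast_zmod_eq_zero_iff_dvd Z b).mp hZ
  have hdvd : (b : ℤ) ∣ (Int.gcd (Int.gcd ((b : ℤ) * X') Y) Z : ℤ) :=
    Int.dvd_coe_gcd (Int.dvd_coe_gcd ⟨X', rfl⟩ hYd) hZd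
  rw [hgcd] at hdvd
  have := Int.le_of_dvd one_pos hdvd
  have := hb.two_le
  omega
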